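/- Let A be an associative ring. Then A is an equational domain — i.e., for every n : ℕ and all subsets T₁, T₂ of the free ring FreeRing (Fin n), there exists a subset T of FreeRing (Fin n) with V(T₁) ∪ V(T₂) = V(T) — if and only if A satisfies: for all x y ∈ A, if x*y = 0 and y*x = 0 then x = 0 or y = 0. -/

import Mathlib

open NonUnitalSubring in
private lemma aux_annihilate {A : Type*} [Ring A] {x y : A}
    (hxy : x * y = 0) (hyx : y * x = 0) :
    ∀ m ∈ closure {x}, ∀ m' ∈ closure {y}, m * m' = 0 ∧ m' * m = 0 := by
  have h1 : ∀ m ∈ closure {x}, m * y = 0 ∧ y * m = 0 := by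
    intro m hm
    induction hm using closure_induction with
    | mem z hz => rw [Set.mem_singleton_iff] at hz; subst hz; exact ⟨hxy, hyx⟩
    | zero => exact ⟨zero_mul y, mul_zero y⟩
    | add a b _ _ ha hb => exact ⟨by rw [add_mul, ha.1, hb.1, add_zero],
        by rw [mul_add, ha.2, hb.2, add_zero]⟩
    | neg a _ ha => exact ⟨by rw [neg_mul, ha.1, neg_zero], by rw [mul_neg, ha.2, neg_zero]⟩
    | mul a b _ _ ha hb => exact ⟨by rw [mul_assoc, hb.1, mul_zero],
        by rw [← mul_assoc, ha.2, zero_mul]⟩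
  intro m hm m' hm'
  have hm1 := h1 m hm
  induction hm' using closure_induction with
  | mem z hz => rw [Set.mem_singleton_iff] at hz; subst hz; exact hm1
  | zero => exact ⟨mul_zero m, zero_mul m⟩
  | add a b _ _ ha hb => exact ⟨by rw [mul_add, ha.1, hb.1, add_zero],
      by rw [add_mul, ha.2, hb.2, add_zero]⟩
  | neg a _ ha => exact ⟨by rw [mul_neg, ha.1, neg_zero], by rw [neg_mul, ha.2, neg_zero]⟩
  | mul a b _ _ ha hb => exact ⟨by rw [← mul_assoc, ha.1, zero_mul],
      by rw [mul_assoc, hb.2, mul_zero]⟩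

set_option maxHeartbeats 1000000 in
theorem ring_equational_domain_iff
    (A : Type*) [Ring A] :
    (∀ (n : ℕ) (T₁ T₂ : Set (FreeRing (Fin n))), ∃ T : Set (FreeRing (Fin n)),
      ({v : Fin n → A | ∀ w ∈ T₁, FreeRing.lift v w = 0} ∪
        {v : Fin n → A | ∀ w ∈ T₂, FreeRing.lift v w = 0}) =
        {v : Fin n → A | ∀ w ∈ T, FreeRing.lift v w = 0}) ↔
    (∀ x y : A, x * y = 0 → y * x = 0 → x = 0 ∨ y = 0) := by
  constructor
  · intro H x y hxy hyx
    obtain ⟨T, hT⟩ := H 2 {FreeRing.of 0} {FreeRing.of 1}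
    have hmem : ∀ v : Fin 2 → A, (v 0 = 0 ∨ v 1 = 0) → ∀ w ∈ T, FreeRing.lift v w = 0 := by
      intro v hv w hw
      have : v ∈ ({v : Fin 2 → A | ∀ w ∈ ({FreeRing.of 0} : Set (FreeRing (Fin 2))),
          FreeRing.lift v w = 0} ∪
          {v : Fin 2 → A | ∀ w ∈ ({FreeRing.of 1} : Set (FreeRing (Fin 2))),
          FreeRing.lift v w = 0}) := by
        rcases hv with h | h
        · exact Or.inl (by simp [h])
        · exact Or.inr (by simp [h])
      rw [hT] at this
      exact this w hw
    by_contra hc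
    push_neg at hc
    obtain ⟨hx0, hy0⟩ := hc
    set e : FreeRing (Fin 2) →+* A := FreeRing.lift ![x, y] with he_def
    set a : FreeRing (Fin 2) →+* A := FreeRing.lift ![x, 0] with ha_def
    set b : FreeRing (Fin 2) →+* A := FreeRing.lift ![(0 : A), y] with hb_def
    set c : FreeRing (Fin 2) →+* A := FreeRing.lift ![(0 : A), 0] with hc_def
    have key : ∀ w : FreeRing (Fin 2), e w = a w + b w - c w ∧
        (a w - c w) ∈ NonUnitalSubring.closure {x} ∧
        (b w - c w) ∈ NonUnitalSubring.closure {y} := by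
      intro w
      induction w with
      | hn1 =>
        refine ⟨by simp, ?_, ?_⟩ <;>
          · simp only [map_neg, map_one, sub_self]
            exact zero_mem _
      | hb i =>
        refine Fin.cases ?_ (fun j => ?_) i
        · simp only [he_def, ha_def, hb_def, hc_def, FreeRing.lift_of, Matrix.cons_val_zero]
          refine ⟨by abel, ?_, by rw [sub_zero]; exact zero_mem _⟩
          rw [sub_zero]
          exact NonUnitalSubring.subset_closure (Set.mem_singleton x)
        · have hj : j = 0 := Subsingleton.elim _ _
          subst hj
          simp only [he_def, ha_def, hb_def, hc_def, FreeRing.lift_of, Fin.succ_zero_eq_one,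
            Matrix.cons_val_one, Matrix.head_cons, Matrix.cons_val_zero]
          refine ⟨by abel, by rw [sub_zero]; exact zero_mem _, ?_⟩
          rw [sub_zero]
          exact NonUnitalSubring.subset_closure (Set.mem_singleton y)
      | ha u w hu hw =>
        obtain ⟨he, hα, hβ⟩ := hu
        obtain ⟨he', hα', hβ'⟩ := hw
        refine ⟨by simp only [map_add, he, he']; abel, ?_, ?_⟩
        · have h : a (u + w) - c (u + w) = (a u - c u) + (a w - c w) := by
            simp only [map_add]; abel
          rw [h]; exact add_mem hα hα'
        · have h : b (u + w) - c (u + w) = (b u - c u) + (b w - c w) := by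
            simp only [map_add]; abel
          rw [h]; exact add_mem hβ hβ'
      | hm u w hu hw =>
        obtain ⟨he, hα, hβ⟩ := hu
        obtain ⟨he', hα', hβ'⟩ := hw
        have hcen : ∀ z : FreeRing (Fin 2), ∃ n : ℤ, c z = (n : A) := by
          intro z
          refine ⟨FreeRing.lift (fun _ => (0:ℤ)) z, ?_⟩
          have h : c = (Int.castRingHom A).comp (FreeRing.lift (fun _ => (0:ℤ))) := by
            apply FreeRing.hom_ext
            intro i
            simp only [hc_def, FreeRing.lift_of, RingHom.comp_apply]
            fin_cases i <;> simp
          rw [h]; rfl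
        have hab : (a u - c u) * (b w - c w) = 0 :=
          (aux_annihilate hxy hyx _ hα _ hβ').1
        have hba : (b u - c u) * (a w - c w) = 0 :=
          (aux_annihilate hxy hyx _ hα' _ hβ).2
        obtain ⟨n, hn⟩ := hcen u
        obtain ⟨m, hm⟩ := hcen w
        refine ⟨?_, ?_, ?_⟩
        · have expand : ∀ au bu cu aw bw cw : A,
            (au + bu - cu) * (aw + bw - cw) =
              au * aw + bu * bw - cu * cw +
                ((au - cu) * (bw - cw) + (bu - cu) * (aw - cw)) := by
            intros; noncomm_ring
          rw [map_mul, map_mul, map_mul, map_mul, he, he', expand, hab, hba]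
          simp
        · have h : a (u * w) - c (u * w) =
              n • (a w - c w) + m • (a u - c u) + (a u - c u) * (a w - c w) := by
            rw [map_mul, map_mul, hn, hm, zsmul_eq_mul, zsmul_eq_mul']
            noncomm_ring
          rw [h]
          exact add_mem (add_mem (zsmul_mem hα' n) (zsmul_mem hα m)) (mul_mem hα hα')
        · have h : b (u * w) - c (u * w) =
              n • (b w - c w) + m • (b u - c u) + (b u - c u) * (b w - c w) := by
            rw [map_mul, map_mul, hn, hm, zsmul_eq_mul, zsmul_eq_mul']
            noncomm_ring
          rw [h]
          exact add_mem (add_mem (zsmul_mem hβ' n) (zsmul_mem hβ m)) (mul_mem hβ hβ')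
    have hxyT : ∀ w ∈ T, e w = 0 := by
      intro w hw
      have ha0 : a w = 0 := hmem ![x, 0] (Or.inr rfl) w hw
      have hb0 : b w = 0 := hmem ![(0:A), y] (Or.inl rfl) w hw
      have hc0 : c w = 0 := hmem ![(0:A), 0] (Or.inl rfl) w hw
      rw [(key w).1, ha0, hb0, hc0]; simp
    have : (![x, y] : Fin 2 → A) ∈ ({v : Fin 2 → A | ∀ w ∈ ({FreeRing.of 0} :
        Set (FreeRing (Fin 2))), FreeRing.lift v w = 0} ∪
        {v : Fin 2 → A | ∀ w ∈ ({FreeRing.of 1} : Set (FreeRing (Fin 2))),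
        FreeRing.lift v w = 0}) := by
      rw [hT]; exact hxyT
    rcases this with h | h
    · exact hx0 (by simpa using h (FreeRing.of 0) rfl)
    · exact hy0 (by simpa using h (FreeRing.of 1) rfl)
  · intro h n T₁ T₂
    refine ⟨{w | ∃ w₁ ∈ T₁, ∃ w₂ ∈ T₂, w = w₁ * w₂ ∨ w = w₂ * w₁}, ?_⟩
    ext v
    constructor
    · rintro (hv | hv) w ⟨w₁, h₁, w₂, h₂, rfl | rfl⟩ <;>
        simp only [map_mul] <;>
        first
        | rw [hv w₁ h₁, zero_mul]
        | rw [hv w₁ h₁, mul_zero]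
        | rw [hv w₂ h₂, zero_mul]
        | rw [hv w₂ h₂, mul_zero]
    · intro hv
      by_contra hc
      simp only [Set.mem_union, Set.mem_setOf_eq, not_or, not_forall] at hc
      obtain ⟨⟨w₁, h₁, ha1⟩, ⟨w₂, h₂, ha2⟩⟩ := hc
      have k1 : FreeRing.lift v w₁ * FreeRing.lift v w₂ = 0 := by
        have := hv (w₁ * w₂) ⟨w₁, h₁, w₂, h₂, Or.inl rfl⟩
        rwa [map_mul] at this
      have k2 : FreeRing.lift v w₂ * FreeRing.lift v w₁ = 0 := by
        have := hv (w₂ * w₁) ⟨w₁, h₁, w₂, h₂, Or.inr rfl⟩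
        rwa [map_mul] at this
      rcases h _ _ k1 k2 with h0 | h0
      · exact ha1 h0
      · exact ha2 h0
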